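/- Suppose π* ≥ 1 satisfies Φ(π*) = c. Then π* = max over t ∈ [T] of sup over d ∈ D of the ratio (∑_{i=1}^t σ(d^i)) / (c + ∑_{i=1}^t (max_{k∈[i]} d_k − d_i)); that is, only the T prefix index sets [t], t ∈ [T], rather than all 2^T subsets of [T], are needed to compute the best possible competitive ratio π*. -/
import Mathlib


open Finset MeasureTheory

noncomputable section

/-- A discharging vector `δ` is feasible for demand profile `d` (with capacity `c`
and per-slot limit `dmax`). -/
def Feasible {T : ℕ} (c dmax : ℝ) (d δ : Fin T → ℝ) : Prop :=
  (∑ t, δ t) ≤ c ∧ ∀ t, 0 ≤ δ t ∧ δ t ≤ min dmax (d t)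

/-- Peak-demand reduction `R(d, δ)`. -/
noncomputable def Red {T : ℕ} (d δ : Fin T → ℝ) : ℝ :=
  (⨆ t, d t) - ⨆ t, (d t - δ t)

/-- Offline optimal peak-demand reduction `σ(d)`. -/
noncomputable def offOpt {T : ℕ} (c dmax : ℝ) (d : Fin T → ℝ) : ℝ :=
  sSup {r | ∃ δ : Fin T → ℝ, Feasible c dmax d δ ∧ r = Red d δ}

/-- Prefix maximum `max_{k ∈ [t]} d_k`. -/
noncomputable def prefMax {T : ℕ} (d : Fin T → ℝ) (t : Fin T) : ℝ :=
  ⨆ k : {k : Fin T // k ≤ t}, d k.1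

/-- The uncertainty set `D`: all profiles with entries in `[dlo, dhi]`. -/
def inD {T : ℕ} (dlo dhi : ℝ) (d : Fin T → ℝ) : Prop :=
  ∀ t, dlo ≤ d t ∧ d t ≤ dhi

/-- Reference profile `d^t`: observed demands up to slot `t`, lowest demand `dlo` afterwards. -/
def ref {T : ℕ} (dlo : ℝ) (d : Fin T → ℝ) (t : Fin T) : Fin T → ℝ :=
  fun k => if k ≤ t then d k else dlo

/-- Output of `pCR-PRM(π)` at slot `t`:
`δ_t(π, d) = [d_t − max_{k∈[t]} d_k + σ(d^t)/π]⁺`. -/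
noncomputable def pcr {T : ℕ} (c dmax dlo : ℝ) (π : ℝ) (d : Fin T → ℝ) (t : Fin T) : ℝ :=
  max (d t - prefMax d t + offOpt c dmax (ref dlo d t) / π) 0

/-- Inventory function `Φ(π) = sup_{d ∈ D} ∑_t δ_t(π, d)`. -/
noncomputable def Phi (T : ℕ) (c dmax dlo dhi : ℝ) (π : ℝ) : ℝ :=
  sSup {s | ∃ d : Fin T → ℝ, inD dlo dhi d ∧ s = ∑ t, pcr c dmax dlo π d t}

-- ### auxiliary lemmas


lemma le_fSup {ι : Type*} [Nonempty ι] [Finite ι] (f : ι → ℝ) (i : ι) :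
    f i ≤ ⨆ j, f j :=
  le_ciSup (Set.Finite.bddAbove (Set.finite_range f)) i

lemma fSup_le {ι : Type*} [Nonempty ι] {f : ι → ℝ} {a : ℝ}
    (h : ∀ i, f i ≤ a) : (⨆ i, f i) ≤ a := ciSup_le h

lemma exists_fSup_eq {ι : Type*} [Nonempty ι] [Finite ι] (f : ι → ℝ) :
    ∃ i, (⨆ j, f j) = f i ∧ ∀ j, f j ≤ f i := by
  obtain ⟨i, hi⟩ := Finite.exists_max f
  exact ⟨i, le_antisymm (fSup_le hi) (le_fSup f i), hi⟩

lemma red_le_dmax {T : ℕ} [Nonempty (Fin T)] {c dmax : ℝ} {d δ : Fin T → ℝ}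
    (h : Feasible c dmax d δ) : Red d δ ≤ dmax := by
  obtain ⟨t, ht, -⟩ := exists_fSup_eq d
  have h0 := (h.2 t).2
  have h1 : d t - dmax ≤ d t - δ t := by
    have := min_le_left dmax (d t); linarith
  have h2 : d t - δ t ≤ ⨆ s, (d s - δ s) := le_fSup (fun s => d s - δ s) t
  unfold Red
  linarith

lemma offOpt_set_bddAbove {T : ℕ} [Nonempty (Fin T)] (c dmax : ℝ) (d : Fin T → ℝ) :
    BddAbove {r | ∃ δ, Feasible c dmax d δ ∧ r = Red d δ} :=
  ⟨dmax, by rintro r ⟨δ, hδ, rfl⟩; exact red_le_dmax hδ⟩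

lemma offOpt_set_nonempty {T : ℕ} {c dmax : ℝ} (hc : 0 ≤ c) (hdmax : 0 ≤ dmax)
    {d : Fin T → ℝ} (hd : ∀ t, 0 ≤ d t) :
    (0:ℝ) ∈ {r | ∃ δ, Feasible c dmax d δ ∧ r = Red d δ} := by
  refine ⟨0, ⟨by simpa using hc, fun t => ⟨le_refl 0, le_min hdmax (hd t)⟩⟩, ?_⟩
  unfold Red; simp

lemma offOpt_nonneg {T : ℕ} [Nonempty (Fin T)] {c dmax : ℝ} (hc : 0 ≤ c) (hdmax : 0 ≤ dmax)
    {d : Fin T → ℝ} (hd : ∀ t, 0 ≤ d t) : 0 ≤ offOpt c dmax d :=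
  le_csSup (offOpt_set_bddAbove c dmax d) (offOpt_set_nonempty hc hdmax hd)

lemma offOpt_le_dmax {T : ℕ} [Nonempty (Fin T)] {c dmax : ℝ} (hc : 0 ≤ c) (hdmax : 0 ≤ dmax)
    {d : Fin T → ℝ} (hd : ∀ t, 0 ≤ d t) : offOpt c dmax d ≤ dmax :=
  csSup_le ⟨0, offOpt_set_nonempty hc hdmax hd⟩
    (by rintro r ⟨δ, hδ, rfl⟩; exact red_le_dmax hδ)

lemma iSup_comp_perm {T : ℕ} (f : Fin T → ℝ) (e : Equiv.Perm (Fin T)) :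
    (⨆ t, f (e t)) = ⨆ t, f t := by
  have h : Set.range (f ∘ e) = Set.range f := e.surjective.range_comp f
  show sSup (Set.range fun t => f (e t)) = sSup (Set.range f)
  rw [show (Set.range fun t => f (e t)) = Set.range (f ∘ e) from rfl, h]

lemma offOpt_comp_perm_le {T : ℕ} [Nonempty (Fin T)] (c dmax : ℝ) (d : Fin T → ℝ)
    (e : Equiv.Perm (Fin T)) (hc : 0 ≤ c) (hdmax : 0 ≤ dmax) (hd : ∀ t, 0 ≤ d t) :
    offOpt c dmax d ≤ offOpt c dmax (d ∘ e) := by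
  apply csSup_le ⟨0, offOpt_set_nonempty hc hdmax hd⟩
  rintro r ⟨δ, ⟨hsum, hpt⟩, rfl⟩
  apply le_csSup (offOpt_set_bddAbove c dmax (d ∘ e))
  refine ⟨δ ∘ e, ⟨?_, fun t => hpt (e t)⟩, ?_⟩
  · rw [show (∑ t, (δ ∘ e) t) = ∑ t, δ t from Equiv.sum_comp e δ]
    exact hsum
  · unfold Red
    rw [show (⨆ t, (d ∘ e) t) = ⨆ t, d t from iSup_comp_perm d e,
        show (⨆ t, ((d ∘ e) t - (δ ∘ e) t)) = ⨆ t, (d t - δ t) from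
          iSup_comp_perm (fun t => d t - δ t) e]

lemma offOpt_comp_perm {T : ℕ} [Nonempty (Fin T)] (c dmax : ℝ) (d : Fin T → ℝ)
    (e : Equiv.Perm (Fin T)) (hc : 0 ≤ c) (hdmax : 0 ≤ dmax) (hd : ∀ t, 0 ≤ d t) :
    offOpt c dmax (d ∘ e) = offOpt c dmax d := by
  refine le_antisymm ?_ (offOpt_comp_perm_le c dmax d e hc hdmax hd)
  have h2 := offOpt_comp_perm_le c dmax (d ∘ e) e.symm hc hdmax (fun t => hd _)
  have h3 : (d ∘ e) ∘ e.symm = d := by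
    funext x; simp
  rwa [h3] at h2

lemma offOpt_mono_lower {T : ℕ} [Nonempty (Fin T)] {c dmax : ℝ} (hc : 0 ≤ c) (hdmax : 0 ≤ dmax)
    {f g : Fin T → ℝ} (hf0 : ∀ t, 0 ≤ f t) (hg0 : ∀ t, 0 ≤ g t) (hfg : ∀ t, f t ≤ g t)
    (hsup : (⨆ t, f t) = ⨆ t, g t) : offOpt c dmax g ≤ offOpt c dmax f := by
  apply csSup_le ⟨0, offOpt_set_nonempty hc hdmax hg0⟩
  rintro r ⟨δ, ⟨hsum, hpt⟩, rfl⟩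
  have hfeas : Feasible c dmax f (fun t => min (δ t) (f t)) := by
    refine ⟨le_trans (Finset.sum_le_sum fun t _ => min_le_left _ _) hsum,
      fun t => ⟨le_min (hpt t).1 (hf0 t), le_min (le_trans (min_le_left _ _)
        (le_trans (hpt t).2 (min_le_left _ _))) (min_le_right _ _)⟩⟩
  have hnn : 0 ≤ ⨆ s, (g s - δ s) := by
    have t0 := Classical.arbitrary (Fin T)
    refine le_trans ?_ (le_fSup (fun s => g s - δ s) t0)
    have := le_trans (hpt t0).2 (min_le_right dmax (g t0))
    linarith
  have hred : Red g δ ≤ Red f (fun t => min (δ t) (f t)) := by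
    unfold Red
    rw [hsup]
    have : (⨆ t, (f t - min (δ t) (f t))) ≤ ⨆ t, (g t - δ t) := by
      apply fSup_le
      intro t
      rcases le_or_gt (δ t) (f t) with h | h
      · rw [min_eq_left h]
        exact le_trans (by linarith [hfg t]) (le_fSup (fun s => g s - δ s) t)
      · rw [min_eq_right h.le]
        simpa using hnn
    linarith
  exact le_trans hred (le_csSup (offOpt_set_bddAbove c dmax f) ⟨_, hfeas, rfl⟩)

lemma le_prefMax {T : ℕ} (d : Fin T → ℝ) {k t : Fin T} (h : k ≤ t) : d k ≤ prefMax d t := by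
  haveI : Nonempty {j : Fin T // j ≤ t} := ⟨⟨t, le_refl t⟩⟩
  exact le_fSup (fun j : {j : Fin T // j ≤ t} => d j.1) ⟨k, h⟩

lemma prefMax_le {T : ℕ} (d : Fin T → ℝ) {t : Fin T} {a : ℝ} (h : ∀ k, k ≤ t → d k ≤ a) :
    prefMax d t ≤ a := by
  haveI : Nonempty {j : Fin T // j ≤ t} := ⟨⟨t, le_refl t⟩⟩
  exact fSup_le (fun j => h j.1 j.2)

lemma prefMax_congr {T : ℕ} {d d' : Fin T → ℝ} {t : Fin T} (h : ∀ k, k ≤ t → d k = d' k) :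
    prefMax d t = prefMax d' t := by
  unfold prefMax; congr 1; funext k; exact h k.1 k.2

lemma exists_prefMax_argmax {T : ℕ} (d : Fin T → ℝ) (t : Fin T) :
    ∃ j, j ≤ t ∧ d j = prefMax d t ∧ prefMax d j = d j := by
  haveI : Nonempty {j : Fin T // j ≤ t} := ⟨⟨t, le_refl t⟩⟩
  obtain ⟨j, hj, -⟩ := exists_fSup_eq (fun j : {j : Fin T // j ≤ t} => d j.1)
  refine ⟨j.1, j.2, hj.symm, le_antisymm (prefMax_le d fun k hk => ?_)
    (le_prefMax d (le_refl _))⟩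
  exact hj ▸ le_prefMax d (hk.trans j.2)

lemma ref_inD {T : ℕ} {dlo dhi : ℝ} (hbd : dlo ≤ dhi) {d : Fin T → ℝ}
    (hd : inD dlo dhi d) (t : Fin T) : inD dlo dhi (ref dlo d t) := by
  intro k
  unfold ref
  split
  · exact hd k
  · exact ⟨le_refl _, hbd⟩

lemma pcr_le_dmax {T : ℕ} [Nonempty (Fin T)] {c dmax dlo : ℝ} {π : ℝ}
    (hc : 0 ≤ c) (hdmax : 0 ≤ dmax) (hdlo : 0 ≤ dlo) (hπ : 1 ≤ π)
    {d : Fin T → ℝ} (hd : ∀ t, 0 ≤ d t) (t : Fin T) :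
    pcr c dmax dlo π d t ≤ dmax := by
  have hrefnn : ∀ k, 0 ≤ ref dlo d t k := by
    intro k; unfold ref; split; exacts [hd k, hdlo]
  have h1 : offOpt c dmax (ref dlo d t) ≤ dmax := offOpt_le_dmax hc hdmax hrefnn
  have h2 : 0 ≤ offOpt c dmax (ref dlo d t) := offOpt_nonneg hc hdmax hrefnn
  have h3 : offOpt c dmax (ref dlo d t) / π ≤ offOpt c dmax (ref dlo d t) :=
    div_le_self h2 hπ
  have h4 : d t ≤ prefMax d t := le_prefMax d (le_refl t)
  unfold pcr
  exact max_le (by linarith) (by linarith)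

lemma phi_set_bddAbove {T : ℕ} [Nonempty (Fin T)] {c dmax dlo dhi : ℝ} {π : ℝ}
    (hc : 0 ≤ c) (hdmax : 0 ≤ dmax) (hdlo : 0 < dlo) (hπ : 1 ≤ π) :
    BddAbove {s | ∃ d : Fin T → ℝ, inD dlo dhi d ∧ s = ∑ t, pcr c dmax dlo π d t} := by
  refine ⟨T * dmax, ?_⟩
  rintro s ⟨d, hd, rfl⟩
  have hdn : ∀ t, 0 ≤ d t := fun t => le_trans hdlo.le (hd t).1
  calc (∑ t, pcr c dmax dlo π d t) ≤ ∑ _t : Fin T, dmax :=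
        Finset.sum_le_sum fun t _ => pcr_le_dmax hc hdmax hdlo.le hπ hdn t
    _ = T * dmax := by simp [Finset.sum_const, Finset.card_univ, nsmul_eq_mul]

lemma sum_ratio_le {T : ℕ} [Nonempty (Fin T)] {c dmax dlo dhi : ℝ}
    (hc : 0 < c) (hdmax : 0 < dmax) (hdlo : 0 < dlo) (hbd : dlo ≤ dhi)
    {π : ℝ} (hπ : 1 ≤ π) (hΦ : Phi T c dmax dlo dhi π = c)
    (t : Fin T) {d : Fin T → ℝ} (hd : inD dlo dhi d) :
    (∑ i ∈ Finset.Iic t, offOpt c dmax (ref dlo d i)) ≤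
      π * (c + ∑ i ∈ Finset.Iic t, (prefMax d i - d i)) := by
  have hπ0 : (0:ℝ) < π := lt_of_lt_of_le one_pos hπ
  set d'' : Fin T → ℝ := ref dlo d t with hd''def
  have hd''D : inD dlo dhi d'' := ref_inD hbd hd t
  have hmem : (∑ i, pcr c dmax dlo π d'' i) ∈
      {s | ∃ d : Fin T → ℝ, inD dlo dhi d ∧ s = ∑ t, pcr c dmax dlo π d t} :=
    ⟨d'', hd''D, rfl⟩
  have hsum_le : (∑ i, pcr c dmax dlo π d'' i) ≤ c :=
    le_trans (le_csSup (phi_set_bddAbove hc.le hdmax.le hdlo hπ) hmem) (le_of_eq hΦ)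
  have hpcr_eq : ∀ i ∈ Finset.Iic t, pcr c dmax dlo π d i = pcr c dmax dlo π d'' i := by
    intro i hi
    rw [Finset.mem_Iic] at hi
    have hpm : prefMax d i = prefMax d'' i := by
      apply prefMax_congr
      intro k hk
      rw [hd''def]
      unfold ref
      rw [if_pos (hk.trans hi)]
    have href : ref dlo d i = ref dlo d'' i := by
      funext k
      unfold ref
      by_cases hk : k ≤ i
      · rw [if_pos hk, if_pos hk, hd''def]
        unfold ref
        rw [if_pos (hk.trans hi)]
      · rw [if_neg hk, if_neg hk]
    have hdi : d i = d'' i := by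
      rw [hd''def]; unfold ref; rw [if_pos hi]
    unfold pcr
    rw [hpm, href, hdi]
  have hpcr_nonneg : ∀ i, 0 ≤ pcr c dmax dlo π d'' i := fun i => le_max_right _ _
  have h1 : (∑ i ∈ Finset.Iic t, pcr c dmax dlo π d i) ≤ c := by
    rw [Finset.sum_congr rfl hpcr_eq]
    exact le_trans (Finset.sum_le_sum_of_subset_of_nonneg (Finset.subset_univ _)
      (fun i _ _ => hpcr_nonneg i)) hsum_le
  have h2 : ∀ i ∈ Finset.Iic t,
      d i - prefMax d i + offOpt c dmax (ref dlo d i) / π ≤ pcr c dmax dlo π d i :=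
    fun i _ => le_max_left _ _
  have h3 := Finset.sum_le_sum h2
  have e1 : (∑ i ∈ Finset.Iic t, (d i - prefMax d i + offOpt c dmax (ref dlo d i) / π))
      = (∑ i ∈ Finset.Iic t, offOpt c dmax (ref dlo d i)) / π
        - ∑ i ∈ Finset.Iic t, (prefMax d i - d i) := by
    rw [Finset.sum_add_distrib, Finset.sum_sub_distrib, Finset.sum_sub_distrib,
      Finset.sum_div]
    ring
  rw [e1] at h3
  have h4 : (∑ i ∈ Finset.Iic t, offOpt c dmax (ref dlo d i)) / π
      ≤ c + ∑ i ∈ Finset.Iic t, (prefMax d i - d i) := by linarith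
  have h5 := (div_le_iff₀ hπ0).mp h4
  linarith [h5, mul_comm (c + ∑ i ∈ Finset.Iic t, (prefMax d i - d i)) π]

lemma ratio_le_pi {T : ℕ} [Nonempty (Fin T)] {c dmax dlo dhi : ℝ}
    (hc : 0 < c) (hdmax : 0 < dmax) (hdlo : 0 < dlo) (hbd : dlo ≤ dhi)
    {π : ℝ} (hπ : 1 ≤ π) (hΦ : Phi T c dmax dlo dhi π = c) (t : Fin T) :
    ∀ r ∈ {r | ∃ d : Fin T → ℝ, inD dlo dhi d ∧
      r = (∑ i ∈ Finset.Iic t, offOpt c dmax (ref dlo d i)) /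
          (c + ∑ i ∈ Finset.Iic t, (prefMax d i - d i))}, r ≤ π := by
  rintro r ⟨d, hd, rfl⟩
  have hB : 0 ≤ ∑ i ∈ Finset.Iic t, (prefMax d i - d i) :=
    Finset.sum_nonneg fun i _ => sub_nonneg.mpr (le_prefMax d (le_refl i))
  have hden : 0 < c + ∑ i ∈ Finset.Iic t, (prefMax d i - d i) := by linarith
  rw [div_le_iff₀ hden]
  have := sum_ratio_le hc hdmax hdlo hbd hπ hΦ t hd
  linarith [mul_comm π (c + ∑ i ∈ Finset.Iic t, (prefMax d i - d i))]

lemma compress {T : ℕ} [Nonempty (Fin T)] {c dmax dlo dhi : ℝ}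
    (hc : 0 < c) (hdmax : 0 < dmax) (hdlo : 0 < dlo) (hbd : dlo ≤ dhi)
    {π : ℝ} (hπ : 1 ≤ π) {d : Fin T → ℝ} (hd : inD dlo dhi d) {ε : ℝ}
    (hsum : c - ε < ∑ i, pcr c dmax dlo π d i) (hε : 0 < ε) (hεc : ε < c) :
    ∃ (t : Fin T) (d' : Fin T → ℝ), inD dlo dhi d' ∧
      c - ε < ∑ k ∈ Finset.Iic t,
        (d' k - prefMax d' k + offOpt c dmax (ref dlo d' k) / π) := by
  classical
  have hπ0 : (0:ℝ) < π := lt_of_lt_of_le one_pos hπ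
  have hT : 0 < T := Fin.pos (Classical.arbitrary (Fin T))
  set a : Fin T → ℝ := fun i => d i - prefMax d i + offOpt c dmax (ref dlo d i) / π with ha
  set A : Finset (Fin T) := Finset.univ.filter (fun i => 0 ≤ a i) with hA
  have hpcr_a : ∀ i, pcr c dmax dlo π d i = if 0 ≤ a i then a i else 0 := by
    intro i
    show max (a i) 0 = if 0 ≤ a i then a i else 0
    split_ifs with h
    · exact max_eq_left h
    · exact max_eq_right (le_of_not_ge h)
  have hsumA : ∑ i ∈ A, a i = ∑ i, pcr c dmax dlo π d i := by
    rw [hA, Finset.sum_filter]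
    exact (Finset.sum_congr rfl fun i _ => (hpcr_a i).symm)
  have hApos : A.Nonempty := by
    by_contra hne
    rw [Finset.not_nonempty_iff_eq_empty] at hne
    have h0 : ∑ i ∈ A, a i = 0 := by rw [hne]; simp
    rw [hsumA] at h0
    linarith
  have hcard1 : 1 ≤ A.card := Finset.card_pos.mpr hApos
  have hcardT : A.card ≤ T := by
    have := Finset.card_le_univ A
    simpa using this
  set en := A.orderIsoOfFin rfl with hen
  have hcc : (Aᶜ).card = T - A.card := by
    rw [Finset.card_compl]
    simp
  set enc := (Aᶜ).orderIsoOfFin hcc with henc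
  set fp : Fin T → Fin T := fun j =>
    if h : (j : ℕ) < A.card then ((en ⟨(j:ℕ), h⟩ : {x // x ∈ A}) : Fin T)
    else ((enc ⟨(j:ℕ) - A.card, by have := j.isLt; omega⟩ : {x // x ∈ Aᶜ}) : Fin T)
    with hfp
  have hfp_lt : ∀ (j : Fin T) (h : (j:ℕ) < A.card),
      fp j = ((en ⟨(j:ℕ), h⟩ : {x // x ∈ A}) : Fin T) := by
    intro j h
    simp only [hfp]
    rw [dif_pos h]
  have hfp_mem : ∀ (j : Fin T) (h : (j:ℕ) < A.card), fp j ∈ A := by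
    intro j h
    rw [hfp_lt j h]
    exact (en ⟨(j:ℕ), h⟩).2
  have hfp_nmem : ∀ (j : Fin T), ¬ (j:ℕ) < A.card → fp j ∉ A := by
    intro j h
    simp only [hfp]
    rw [dif_neg h]
    exact Finset.mem_compl.mp (enc ⟨(j:ℕ) - A.card, by have := j.isLt; omega⟩).2
  have hfp_inj : Function.Injective fp := by
    intro j j' hjj'
    by_cases h1 : (j:ℕ) < A.card <;> by_cases h2 : (j':ℕ) < A.card
    · rw [hfp_lt j h1, hfp_lt j' h2] at hjj'
      have h3 := en.injective (Subtype.coe_injective hjj')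
      have h4 : (j:ℕ) = (j':ℕ) := by
        simpa using congrArg (fun x : Fin A.card => (x:ℕ)) h3
      exact Fin.ext h4
    · exact absurd (hjj' ▸ hfp_mem j h1) (hfp_nmem j' h2)
    · exact absurd (hjj'.symm ▸ hfp_mem j' h2) (hfp_nmem j h1)
    · simp only [hfp] at hjj'
      rw [dif_neg h1, dif_neg h2] at hjj'
      have h3 := enc.injective (Subtype.coe_injective hjj')
      have h4 : (j:ℕ) - A.card = (j':ℕ) - A.card := by
        simpa using congrArg (fun x : Fin (T - A.card) => (x:ℕ)) h3
      exact Fin.ext (by omega)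
  have hfp_bij : Function.Bijective fp := Finite.injective_iff_bijective.mp hfp_inj
  set e : Equiv.Perm (Fin T) := Equiv.ofBijective fp hfp_bij with he_def
  have he : ∀ j, e j = fp j := fun j => rfl
  set dA : Fin T → ℝ := fun i => if i ∈ A then d i else dlo with hdA
  set d' : Fin T → ℝ := fun j =>
    if h : (j:ℕ) < A.card then d ((en ⟨(j:ℕ), h⟩ : {x // x ∈ A}) : Fin T) else dlo with hd'
  have hd'D : inD dlo dhi d' := by
    intro j
    simp only [hd']
    split
    · exact hd _
    · exact ⟨le_refl _, hbd⟩
  -- the key pointwise estimate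
  have key : ∀ (k : Fin T) (hk : (k:ℕ) < A.card),
      a ((en ⟨(k:ℕ), hk⟩ : {x // x ∈ A}) : Fin T) ≤
        d' k - prefMax d' k + offOpt c dmax (ref dlo d' k) / π := by
    intro k hk
    set i : Fin T := ((en ⟨(k:ℕ), hk⟩ : {x // x ∈ A}) : Fin T) with hi
    -- s1 : permutation identity
    have hrefeq : ref dlo d' k = (ref dlo dA i) ∘ ⇑e := by
      funext j
      simp only [Function.comp_apply, he j]
      show (if j ≤ k then d' j else dlo) = (if fp j ≤ i then dA (fp j) else dlo)
      by_cases hj1 : (j:ℕ) < A.card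
      · have hfpj := hfp_lt j hj1
        by_cases hjk : j ≤ k
        · have hjk' : (⟨(j:ℕ), hj1⟩ : Fin A.card) ≤ ⟨(k:ℕ), hk⟩ := by
            rw [Fin.mk_le_mk]; exact hjk
          have hle : fp j ≤ i := by
            rw [hfpj, hi]
            exact Subtype.coe_le_coe.mpr (en.le_iff_le.mpr hjk')
          rw [if_pos hjk, if_pos hle, hfpj]
          simp only [hd', hdA]
          rw [dif_pos hj1, if_pos (en ⟨(j:ℕ), hj1⟩).2]
        · have hkj : (⟨(k:ℕ), hk⟩ : Fin A.card) < ⟨(j:ℕ), hj1⟩ := by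
            rw [Fin.mk_lt_mk]
            exact Fin.lt_def.mp (lt_of_not_ge hjk)
          have hlt : i < fp j := by
            rw [hfpj, hi]
            exact Subtype.coe_lt_coe.mpr (en.lt_iff_lt.mpr hkj)
          rw [if_neg hjk, if_neg (not_le_of_gt hlt)]
      · have hnm := hfp_nmem j hj1
        have hjk : ¬ j ≤ k := by
          rw [Fin.le_def]; omega
        rw [if_neg hjk]
        by_cases h2 : fp j ≤ i
        · rw [if_pos h2]
          simp only [hdA]
          rw [if_neg hnm]
        · rw [if_neg h2]
    have hnnA : ∀ j, 0 ≤ ref dlo dA i j := by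
      intro j
      unfold ref
      split
      · simp only [hdA]; split
        · exact le_trans hdlo.le (hd _).1
        · exact hdlo.le
      · exact hdlo.le
    have hσeq : offOpt c dmax (ref dlo d' k) = offOpt c dmax (ref dlo dA i) := by
      rw [hrefeq]
      exact offOpt_comp_perm c dmax _ e hc.le hdmax.le hnnA
    -- s4 : lowering estimate
    obtain ⟨j0, hj0i, hj0eq, hj0pm⟩ := exists_prefMax_argmax d i
    have hj0A : j0 ∈ A := by
      rw [hA, Finset.mem_filter]
      refine ⟨Finset.mem_univ _, ?_⟩
      have hrnn : ∀ s, 0 ≤ ref dlo d j0 s := by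
        intro s; unfold ref; split
        · exact le_trans hdlo.le (hd _).1
        · exact hdlo.le
      have hσnn : 0 ≤ offOpt c dmax (ref dlo d j0) := offOpt_nonneg hc.le hdmax.le hrnn
      show 0 ≤ a j0
      simp only [ha]
      rw [hj0pm]
      have : 0 ≤ offOpt c dmax (ref dlo d j0) / π := div_nonneg hσnn hπ0.le
      linarith
    have hfg : ∀ j, ref dlo dA i j ≤ ref dlo d i j := by
      intro j
      unfold ref
      split
      · simp only [hdA]; split
        · exact le_refl _
        · exact (hd j).1
      · exact le_refl _
    have hgnn : ∀ j, 0 ≤ ref dlo d i j := fun j => le_trans (hnnA j) (hfg j)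
    have hsup : (⨆ j, ref dlo dA i j) = ⨆ j, ref dlo d i j := by
      have le1 : (⨆ j, ref dlo dA i j) ≤ ⨆ j, ref dlo d i j :=
        fSup_le fun j => le_trans (hfg j) (le_fSup (fun j => ref dlo d i j) j)
      have le2 : (⨆ j, ref dlo d i j) ≤ prefMax d i := by
        apply fSup_le
        intro j
        unfold ref
        split
        · exact le_prefMax d ‹j ≤ i›
        · exact le_trans ((hd i).1) (le_prefMax d (le_refl i))
      have le3 : prefMax d i ≤ ⨆ j, ref dlo dA i j := by
        have hval : ref dlo dA i j0 = prefMax d i := by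
          unfold ref
          rw [if_pos hj0i]
          simp only [hdA]
          rw [if_pos hj0A, hj0eq]
        exact hval ▸ le_fSup (fun j => ref dlo dA i j) j0
      exact le_antisymm le1 (le_trans le2 le3)
    have hσle : offOpt c dmax (ref dlo d i) ≤ offOpt c dmax (ref dlo dA i) :=
      offOpt_mono_lower hc.le hdmax.le hnnA hgnn hfg hsup
    -- s5
    have hpm : prefMax d' k ≤ prefMax d i := by
      apply prefMax_le
      intro j hj
      have hj1 : (j:ℕ) < A.card := lt_of_le_of_lt (Fin.le_def.mp hj) hk
      have hd'j : d' j = d ((en ⟨(j:ℕ), hj1⟩ : {x // x ∈ A}) : Fin T) := by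
        simp only [hd']; rw [dif_pos hj1]
      have hji : ((en ⟨(j:ℕ), hj1⟩ : {x // x ∈ A}) : Fin T) ≤ i := by
        rw [hi]
        exact Subtype.coe_le_coe.mpr (en.le_iff_le.mpr (by rw [Fin.mk_le_mk]; exact hj))
      rw [hd'j]
      exact le_prefMax d hji
    -- s6
    have hd'k : d' k = d i := by
      simp only [hd']
      rw [dif_pos hk]
    -- combine
    have hdiv : offOpt c dmax (ref dlo d i) / π ≤ offOpt c dmax (ref dlo d' k) / π := by
      rw [hσeq]
      gcongr
    show a i ≤ d' k - prefMax d' k + offOpt c dmax (ref dlo d' k) / π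
    simp only [ha]
    rw [hd'k]
    linarith [hdiv, hpm]
  -- assemble sums
  set t0 : Fin T := ⟨A.card - 1, by omega⟩ with ht0
  have hmemIic : ∀ k : Fin T, k ∈ Finset.Iic t0 ↔ (k:ℕ) < A.card := by
    intro k
    rw [Finset.mem_Iic, Fin.le_def, ht0]
    simp only []
    omega
  set g : Fin T → ℝ := fun k =>
    if h : (k:ℕ) < A.card then a ((en ⟨(k:ℕ), h⟩ : {x // x ∈ A}) : Fin T) else 0 with hg
  have hsum_g : ∑ k ∈ Finset.Iic t0, g k = ∑ i ∈ A, a i := by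
    refine Finset.sum_bij'
      (fun k hk => ((en ⟨(k:ℕ), (hmemIic k).mp hk⟩ : {x // x ∈ A}) : Fin T))
      (fun b hb => (⟨(en.symm ⟨b, hb⟩ : Fin A.card), lt_of_lt_of_le (en.symm ⟨b, hb⟩).isLt hcardT⟩ : Fin T))
      (fun k hk => (en ⟨(k:ℕ), (hmemIic k).mp hk⟩).2)
      (fun b hb => (hmemIic _).mpr (by simpa using (en.symm ⟨b, hb⟩).isLt))
      ?_ ?_ ?_
    · intro k hk
      apply Fin.ext
      simp
    · intro b hb
      simp
    · intro k hk
      simp only [hg]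
      rw [dif_pos ((hmemIic k).mp hk)]
  have hg_le : ∀ k ∈ Finset.Iic t0,
      g k ≤ d' k - prefMax d' k + offOpt c dmax (ref dlo d' k) / π := by
    intro k hk
    have hk' := (hmemIic k).mp hk
    simp only [hg]
    rw [dif_pos hk']
    exact key k hk'
  refine ⟨t0, d', hd'D, ?_⟩
  calc c - ε < ∑ i, pcr c dmax dlo π d i := hsum
    _ = ∑ i ∈ A, a i := hsumA.symm
    _ = ∑ k ∈ Finset.Iic t0, g k := hsum_g.symm
    _ ≤ _ := Finset.sum_le_sum hg_le

/-- if `Φ(π*) = c`, only the `T` prefix index sets are needed: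
`π* = max_{t∈[T]} sup_{d∈D} (∑_{i=1}^t σ(d^i)) / (c + ∑_{i=1}^t (max_{k∈[i]} d_k − d_i))`. -/
theorem stmt16 (T : ℕ) (hT : 0 < T) (c dmax dlo dhi : ℝ)
    (hc : 0 < c) (hdmax : 0 < dmax) (hdlo : 0 < dlo) (hbd : dlo ≤ dhi)
    (π : ℝ) (hπ : 1 ≤ π) (hΦ : Phi T c dmax dlo dhi π = c) :
    π = ⨆ t : Fin T, sSup {r | ∃ d : Fin T → ℝ, inD dlo dhi d ∧
      r = (∑ i ∈ Finset.Iic t, offOpt c dmax (ref dlo d i)) /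
          (c + ∑ i ∈ Finset.Iic t, (prefMax d i - d i))} := by
  haveI : Nonempty (Fin T) := ⟨⟨0, hT⟩⟩
  have hπ0 : (0:ℝ) < π := lt_of_lt_of_le one_pos hπ
  have hsetne : ∀ t : Fin T, ((fun _ => dlo : Fin T → ℝ) |> fun dd =>
      (∑ i ∈ Finset.Iic t, offOpt c dmax (ref dlo dd i)) /
          (c + ∑ i ∈ Finset.Iic t, (prefMax dd i - dd i))) ∈
      {r | ∃ d : Fin T → ℝ, inD dlo dhi d ∧
        r = (∑ i ∈ Finset.Iic t, offOpt c dmax (ref dlo d i)) /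
            (c + ∑ i ∈ Finset.Iic t, (prefMax d i - d i))} :=
    fun t => ⟨fun _ => dlo, fun _ => ⟨le_refl _, hbd⟩, rfl⟩
  apply le_antisymm
  · -- π ≤ iSup
    have hstep : ∀ η : ℝ, 0 < η →
        π ≤ (⨆ t : Fin T, sSup {r | ∃ d : Fin T → ℝ, inD dlo dhi d ∧
          r = (∑ i ∈ Finset.Iic t, offOpt c dmax (ref dlo d i)) /
              (c + ∑ i ∈ Finset.Iic t, (prefMax d i - d i))}) + η := by
      intro η hη
      set ε := min (c/2) (η * c / π) with hεdef
      have hε0 : 0 < ε := lt_min (by linarith) (by positivity)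
      have hεc : ε < c := lt_of_le_of_lt (min_le_left _ _) (by linarith)
      have hπε : π * ε ≤ η * c := by
        have h1 : ε ≤ η * c / π := min_le_right _ _
        calc π * ε ≤ π * (η * c / π) := mul_le_mul_of_nonneg_left h1 hπ0.le
          _ = η * c := by field_simp
      have hne : {s | ∃ d : Fin T → ℝ, inD dlo dhi d ∧
          s = ∑ t, pcr c dmax dlo π d t}.Nonempty :=
        ⟨_, ⟨fun _ => dlo, fun _ => ⟨le_refl _, hbd⟩, rfl⟩⟩
      have hlt : c - ε < Phi T c dmax dlo dhi π := by rw [hΦ]; linarith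
      obtain ⟨s, hsmem, hs⟩ := exists_lt_of_lt_csSup hne hlt
      obtain ⟨d, hdD, rfl⟩ := hsmem
      obtain ⟨t, d', hd'D, hkey⟩ := compress hc hdmax hdlo hbd hπ hdD hs hε0 hεc
      set B := ∑ k ∈ Finset.Iic t, (prefMax d' k - d' k) with hB
      set N := ∑ k ∈ Finset.Iic t, offOpt c dmax (ref dlo d' k) with hN
      have hBnn : 0 ≤ B :=
        Finset.sum_nonneg fun k _ => sub_nonneg.mpr (le_prefMax d' (le_refl k))
      have e1 : ∑ k ∈ Finset.Iic t,
          (d' k - prefMax d' k + offOpt c dmax (ref dlo d' k) / π) = N / π - B := by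
        rw [hN, hB, Finset.sum_add_distrib, Finset.sum_sub_distrib, Finset.sum_sub_distrib,
          Finset.sum_div]
        ring
      rw [e1] at hkey
      have hden : 0 < c + B := by linarith
      have hkey2 : (c - ε + B) * π < N := by
        have h2 : c - ε + B < N / π := by linarith
        exact (lt_div_iff₀ hπ0).mp h2
      have hrlb : π - η ≤ N / (c + B) := by
        rw [le_div_iff₀ hden]
        nlinarith [mul_nonneg hη.le hBnn]
      have hbdd : BddAbove {r | ∃ dd : Fin T → ℝ, inD dlo dhi dd ∧
          r = (∑ i ∈ Finset.Iic t, offOpt c dmax (ref dlo dd i)) /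
              (c + ∑ i ∈ Finset.Iic t, (prefMax dd i - dd i))} :=
        ⟨π, fun r hr => ratio_le_pi hc hdmax hdlo hbd hπ hΦ t r hr⟩
      have hmem2 : N / (c + B) ∈ {r | ∃ dd : Fin T → ℝ, inD dlo dhi dd ∧
          r = (∑ i ∈ Finset.Iic t, offOpt c dmax (ref dlo dd i)) /
              (c + ∑ i ∈ Finset.Iic t, (prefMax dd i - dd i))} :=
        ⟨d', hd'D, by rw [hN, hB]⟩
      have h5 : N / (c + B) ≤ sSup {r | ∃ dd : Fin T → ℝ, inD dlo dhi dd ∧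
          r = (∑ i ∈ Finset.Iic t, offOpt c dmax (ref dlo dd i)) /
              (c + ∑ i ∈ Finset.Iic t, (prefMax dd i - dd i))} := le_csSup hbdd hmem2
      have h6 : sSup {r | ∃ dd : Fin T → ℝ, inD dlo dhi dd ∧
          r = (∑ i ∈ Finset.Iic t, offOpt c dmax (ref dlo dd i)) /
              (c + ∑ i ∈ Finset.Iic t, (prefMax dd i - dd i))} ≤
          ⨆ t' : Fin T, sSup {r | ∃ d : Fin T → ℝ, inD dlo dhi d ∧
            r = (∑ i ∈ Finset.Iic t', offOpt c dmax (ref dlo d i)) /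
                (c + ∑ i ∈ Finset.Iic t', (prefMax d i - d i))} :=
        le_fSup (fun t' : Fin T => sSup {r | ∃ d : Fin T → ℝ, inD dlo dhi d ∧
            r = (∑ i ∈ Finset.Iic t', offOpt c dmax (ref dlo d i)) /
                (c + ∑ i ∈ Finset.Iic t', (prefMax d i - d i))}) t
      linarith
    by_contra hcon
    push_neg at hcon
    have := hstep ((π - (⨆ t : Fin T, sSup {r | ∃ d : Fin T → ℝ, inD dlo dhi d ∧
      r = (∑ i ∈ Finset.Iic t, offOpt c dmax (ref dlo d i)) /
          (c + ∑ i ∈ Finset.Iic t, (prefMax d i - d i))})) / 2) (by linarith)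
    linarith
  · apply fSup_le
    intro t
    exact csSup_le ⟨_, hsetne t⟩ (fun r hr => ratio_le_pi hc hdmax hdlo hbd hπ hΦ t r hr)
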